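/- arXiv:0906.4059 — 3 statements merged into one kernel-verified Lean document; each statement's English description precedes it below -/
import Mathlib

section
/- Let (X,𝒜,μ) be a σ-finite measure space, T:X→X a measure-preserving map, 𝒱 an exhaustive family satisfying (A1), and F∈L^∞(μ) such that the average Avg(F) exists. Then for every time t∈ℕ, the average Avg(F∘T^t) exists and Avg(F∘T^t)=Avg(F). -/
noncomputable section

open MeasureTheory Filter Topology

variable {X : Type*}

/-- A family of finite-measure measurable sets is *exhaustive* if it contains an
increasing sequence whose union is the whole space. -/
def Exhaustive [MeasurableSpace X] (μ : Measure X) (𝒱 : Set (Set X)) : Prop :=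
  (∀ A ∈ 𝒱, MeasurableSet A ∧ μ A < ⊤) ∧
    ∃ W : ℕ → Set X, (∀ n, W n ∈ 𝒱) ∧ Monotone W ∧ (⋃ n, W n) = Set.univ

/-- The (μ-uniform) infinite-volume limit of a set function `φ` along the family `𝒱`
equals `L`. -/
def IVLim [MeasurableSpace X] (μ : Measure X) (𝒱 : Set (Set X)) (φ : Set X → ℝ) (L : ℝ) :
    Prop :=
  ∀ ε > 0, ∃ M : ℝ, 0 < M ∧ ∀ V ∈ 𝒱, M ≤ (μ V).toReal → |φ V - L| < ε

/-- The normalized average `μ_V(F) = (1/μ(V)) ∫_V F dμ` of `F` over a set `V`. -/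
def avgOn [MeasurableSpace X] (μ : Measure X) (F : X → ℝ) (V : Set X) : ℝ :=
  (∫ x in V, F x ∂μ) / (μ V).toReal

/-- `F` possesses the infinite-volume average `L` along the family `𝒱`. -/
def HasAvg [MeasurableSpace X] (μ : Measure X) (𝒱 : Set (Set X)) (F : X → ℝ) (L : ℝ) :
    Prop :=
  IVLim μ 𝒱 (avgOn μ F) L

/-- Assumption (A1): for each fixed time `t`, `μ(T^{-t} V Δ V) = o(μ(V))` in the
infinite-volume limit. -/
def A1 [MeasurableSpace X] (μ : Measure X) (T : X → X) (𝒱 : Set (Set X)) : Prop :=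
  ∀ t : ℕ, IVLim μ 𝒱 (fun V => (μ (symmDiff (T^[t] ⁻¹' V) V)).toReal / (μ V).toReal) 0

lemma key_est [MeasurableSpace X] (μ : Measure X) (g : X → ℝ)
    (hg : Measurable g) (D : ℝ) (hgb : ∀ x, |g x| ≤ D)
    (V W : Set X) (hV : MeasurableSet V) (hW : MeasurableSet W)
    (hVf : μ V < ⊤) (hWf : μ W < ⊤) :
    |(∫ x in V, g x ∂μ) - ∫ x in W, g x ∂μ| ≤ D * (μ (symmDiff W V)).toReal := by
  have hint : ∀ S : Set X, μ S < ⊤ → IntegrableOn g S μ := by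
    intro S hS
    exact Integrable.mono' (integrableOn_const hS.ne : IntegrableOn (fun _ => D) S μ)
      hg.aestronglyMeasurable (Filter.Eventually.of_forall fun x => hgb x)
  have hIV : IntegrableOn g V μ := hint V hVf
  have hIW : IntegrableOn g W μ := hint W hWf
  have hVW : MeasurableSet (V ∩ W) := hV.inter hW
  have h1 : (∫ x in V \ (V ∩ W), g x ∂μ) = (∫ x in V, g x ∂μ) - ∫ x in V ∩ W, g x ∂μ :=
    integral_diff hVW hIV Set.inter_subset_left
  have h2 : (∫ x in W \ (V ∩ W), g x ∂μ) = (∫ x in W, g x ∂μ) - ∫ x in V ∩ W, g x ∂μ :=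
    integral_diff hVW hIW Set.inter_subset_right
  have e1 : V \ (V ∩ W) = V \ W := by ext x; simp only [Set.mem_diff, Set.mem_inter_iff]; tauto
  have e2 : W \ (V ∩ W) = W \ V := by ext x; simp only [Set.mem_diff, Set.mem_inter_iff]; tauto
  rw [e1] at h1; rw [e2] at h2
  have hdiff : (∫ x in V, g x ∂μ) - (∫ x in W, g x ∂μ)
      = (∫ x in V \ W, g x ∂μ) - ∫ x in W \ V, g x ∂μ := by
    rw [h1, h2]; ring
  have hb : ∀ S : Set X, μ S < ⊤ → |∫ x in S, g x ∂μ| ≤ D * (μ S).toReal := by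
    intro S hS
    have := norm_setIntegral_le_of_norm_le_const (μ := μ) (s := S) (C := D) (f := g) hS
      (fun x _ => by simpa using hgb x)
    simpa [Measure.real] using this
  have hμ1 : μ (V \ W) < ⊤ := lt_of_le_of_lt (measure_mono Set.diff_subset) hVf
  have hμ2 : μ (W \ V) < ⊤ := lt_of_le_of_lt (measure_mono Set.diff_subset) hWf
  have hsd : μ (symmDiff W V) = μ (V \ W) + μ (W \ V) := by
    rw [Set.symmDiff_def]
    rw [measure_union (disjoint_sdiff_sdiff) (hV.diff hW)]
    exact add_comm _ _
  rw [hdiff, hsd, ENNReal.toReal_add hμ1.ne hμ2.ne, mul_add]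
  calc |(∫ x in V \ W, g x ∂μ) - ∫ x in W \ V, g x ∂μ|
      ≤ |∫ x in V \ W, g x ∂μ| + |∫ x in W \ V, g x ∂μ| := abs_sub _ _
    _ ≤ D * (μ (V \ W)).toReal + D * (μ (W \ V)).toReal :=
        add_le_add (hb _ hμ1) (hb _ hμ2)


/-- Lemma 2.7 (invariance of the average): if `F ∈ L^∞(μ)` has average `A`, then for
every `t ∈ ℕ` the average of `F ∘ T^t` exists and equals `A`. -/
theorem avg_invariant [MeasurableSpace X] (μ : Measure X) [SigmaFinite μ]
    (T : X → X) (hT : MeasurePreserving T μ μ)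
    (𝒱 : Set (Set X)) (hex : Exhaustive μ 𝒱) (hA1 : A1 μ T 𝒱)
    (F : X → ℝ) (hFmeas : Measurable F) (C : ℝ) (hFbdd : ∀ x, |F x| ≤ C)
    (A : ℝ) (hF : HasAvg μ 𝒱 F A) (t : ℕ) :
    HasAvg μ 𝒱 (fun x => F (T^[t] x)) A := by
  set g : X → ℝ := fun x => F (T^[t] x) with hg_def
  have hTt : MeasurePreserving (T^[t]) μ μ := hT.iterate t
  have hgmeas : Measurable g := hFmeas.comp hTt.measurable
  have hgb : ∀ x, |g x| ≤ |C| := fun x => (hFbdd _).trans (le_abs_self C)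
  intro ε hε
  have hε2 : 0 < ε / 2 := by linarith
  obtain ⟨M₁, hM₁, h₁⟩ := hF (ε / 2) hε2
  set ε' : ℝ := ε / (2 * (|C| + 1)) with hε'_def
  have hCpos : 0 < |C| + 1 := by positivity
  have hε' : 0 < ε' := by positivity
  obtain ⟨M₂, hM₂, h₂⟩ := hA1 t ε' hε'
  refine ⟨max M₁ M₂, lt_of_lt_of_le hM₁ (le_max_left _ _), fun V hV hMV => ?_⟩
  have hVmeas : MeasurableSet V := (hex.1 V hV).1
  have hVfin : μ V < ⊤ := (hex.1 V hV).2
  set W : Set X := T^[t] ⁻¹' V with hW_def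
  have hWmeas : MeasurableSet W := hTt.measurable hVmeas
  have hWfin : μ W < ⊤ := by rw [hW_def, hTt.measure_preimage hVmeas.nullMeasurableSet]; exact hVfin
  have hm : (0:ℝ) < (μ V).toReal := lt_of_lt_of_le (lt_of_lt_of_le hM₁ (le_max_left _ _)) hMV
  -- ∫ over W of g equals ∫ over V of F
  have hkey : (∫ x in W, g x ∂μ) = ∫ x in V, F x ∂μ := by
    rw [hW_def]
    rw [← setIntegral_map hVmeas (by rw [hTt.map_eq]; exact hFmeas.aestronglyMeasurable)
      hTt.measurable.aemeasurable, hTt.map_eq]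
  -- estimate on avgOn difference
  have hest : |avgOn μ g V - avgOn μ F V| ≤ |C| * ((μ (symmDiff W V)).toReal / (μ V).toReal) := by
    have h := key_est μ g hgmeas |C| hgb V W hVmeas hWmeas hVfin hWfin
    rw [hkey] at h
    have : avgOn μ g V - avgOn μ F V
        = ((∫ x in V, g x ∂μ) - ∫ x in V, F x ∂μ) / (μ V).toReal := by
      rw [avgOn, avgOn]; ring
    rw [this, abs_div, abs_of_pos hm, div_le_iff₀ hm] at *
    calc |(∫ x in V, g x ∂μ) - ∫ x in V, F x ∂μ|
        ≤ |C| * (μ (symmDiff W V)).toReal := h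
      _ = |C| * ((μ (symmDiff W V)).toReal / (μ V).toReal) * (μ V).toReal := by
          field_simp
  have hδ : (μ (symmDiff W V)).toReal / (μ V).toReal < ε' := by
    have := h₂ V hV (le_trans (le_max_right _ _) hMV)
    simpa [abs_of_nonneg (div_nonneg ENNReal.toReal_nonneg ENNReal.toReal_nonneg)] using this
  have hδ0 : 0 ≤ (μ (symmDiff W V)).toReal / (μ V).toReal :=
    div_nonneg ENNReal.toReal_nonneg ENNReal.toReal_nonneg
  have h1 : |C| * ((μ (symmDiff W V)).toReal / (μ V).toReal) < ε / 2 := by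
    calc |C| * ((μ (symmDiff W V)).toReal / (μ V).toReal)
        ≤ |C| * ε' := mul_le_mul_of_nonneg_left hδ.le (abs_nonneg C)
      _ < (|C| + 1) * ε' := by nlinarith
      _ = ε / 2 := by rw [hε'_def]; field_simp
  have h2' := h₁ V hV (le_trans (le_max_left _ _) hMV)
  calc |avgOn μ g V - A| ≤ |avgOn μ g V - avgOn μ F V| + |avgOn μ F V - A| := abs_sub_le _ _ _
    _ < ε / 2 + ε / 2 := add_lt_add_of_le_of_lt (hest.trans h1.le) h2'
    _ = ε := by ring
end
end

section
/- Let (X,𝒜,μ) be a σ-finite measure space, T:X→X measure-preserving, 𝒱 an exhaustive family satisfying (A1), 𝔊⊆L^∞(μ) a class of functions each possessing an average Avg(F), and 𝔏⊆L¹(μ). Suppose that every G∈𝔊 can be written μ-almost everywhere as G(x)=Σ_{j∈ℕ} g_j(x) with g_j∈𝔏, and for every V∈𝒱 there exists a finite subset J_V⊆ℕ such that ∫_X |G·1_V − Σ_{j∈J_V} g_j| dμ = o(μ(V)) and Σ_{j∈J_V} ‖g_j‖_{L¹} = O(μ(V)) as μ(V)→∞ along 𝒱. Then (M5) implies (M2).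 -/
noncomputable section

open MeasureTheory Filter Topology

variable {X : Type*}

/-- Global-global mixing (M2). -/
def MixM2 [MeasurableSpace X] (μ : Measure X) (T : X → X) (𝒱 : Set (Set X))
    (𝔊 : Set (X → ℝ)) (Avg : (X → ℝ) → ℝ) : Prop :=
  ∀ F ∈ 𝔊, ∀ G ∈ 𝔊, ∀ ε > 0, ∃ M : ℝ, 0 < M ∧
    ∀ t : ℕ, M ≤ (t : ℝ) → ∀ V ∈ 𝒱, M ≤ (μ V).toReal →
      |avgOn μ (fun x => F (T^[t] x) * G x) V - Avg F * Avg G| < ε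

/-- Global-local mixing (M5). -/
def MixM5 [MeasurableSpace X] (μ : Measure X) (T : X → X) (𝔊 𝔏 : Set (X → ℝ))
    (Avg : (X → ℝ) → ℝ) : Prop :=
  ∀ F ∈ 𝔊, ∀ ε > 0, ∃ N : ℕ, ∀ t ≥ N, ∀ g ∈ 𝔏, (∫ x, |g x| ∂μ) ≠ 0 →
    |(∫ x, F (T^[t] x) * g x ∂μ) - Avg F * ∫ x, g x ∂μ| / (∫ x, |g x| ∂μ) < ε

set_option maxHeartbeats 1000000 in
/-- Proposition 3.4: if every global observable decomposes, compatibly with the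
infinite-volume limit, into local observables, then (M5) ⟹ (M2). -/
theorem m5_implies_m2 [MeasurableSpace X] (μ : Measure X) [SigmaFinite μ]
    (T : X → X) (hT : MeasurePreserving T μ μ)
    (𝒱 : Set (Set X)) (hex : Exhaustive μ 𝒱) (hA1 : A1 μ T 𝒱)
    (𝔊 𝔏 : Set (X → ℝ))
    (h𝔊 : ∀ F ∈ 𝔊, Measurable F ∧ ∃ C, ∀ x, |F x| ≤ C)
    (h𝔏 : ∀ g ∈ 𝔏, Integrable g μ)
    (Avg : (X → ℝ) → ℝ) (hAvg : ∀ F ∈ 𝔊, HasAvg μ 𝒱 F (Avg F))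
    (hdecomp : ∀ G ∈ 𝔊, ∃ g : ℕ → X → ℝ, (∀ j, g j ∈ 𝔏) ∧
      (∀ᵐ x ∂μ, HasSum (fun j => g j x) (G x)) ∧
      ∃ J : Set X → Finset ℕ,
        IVLim μ 𝒱
          (fun V => (∫ x, |Set.indicator V G x - ∑ j ∈ J V, g j x| ∂μ) / (μ V).toReal) 0 ∧
        ∃ K M : ℝ, ∀ V ∈ 𝒱, M ≤ (μ V).toReal →
          (∑ j ∈ J V, ∫ x, |g j x| ∂μ) ≤ K * (μ V).toReal)
    (hM5 : MixM5 μ T 𝔊 𝔏 Avg) :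
    MixM2 μ T 𝒱 𝔊 Avg := by
  intro F hF G hG ε hε
  obtain ⟨hFmeas, C₀, hC₀⟩ := h𝔊 F hF
  obtain ⟨hGmeas, D₀, hD₀⟩ := h𝔊 G hG
  obtain ⟨g, hg𝔏, -, J, hJ1, K, MK, hK⟩ := hdecomp G hG
  have hgint : ∀ j, Integrable (g j) μ := fun j => h𝔏 _ (hg𝔏 j)
  set C : ℝ := max C₀ 0 with hCdef
  have hCnn : (0:ℝ) ≤ C := le_max_right _ _
  have hFbd : ∀ x, |F x| ≤ C := fun x => (hC₀ x).trans (le_max_left _ _)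
  set A : ℝ := |Avg F| with hAdef
  have hAnn : (0:ℝ) ≤ A := abs_nonneg _
  set K' : ℝ := max K 1 with hK'def
  have hKK' : K ≤ K' := le_max_left _ _
  have hK'pos : (0:ℝ) < K' := lt_of_lt_of_le one_pos (le_max_right _ _)
  have hε1pos : 0 < ε / (3 * K') := by positivity
  obtain ⟨N, hN⟩ := hM5 F hF _ hε1pos
  have hε2pos : 0 < ε / (3 * (C + A + 1)) := by positivity
  obtain ⟨M₁, hM₁pos, hM₁⟩ := hJ1 _ hε2pos
  have hε3pos : 0 < ε / (3 * (A + 1)) := by positivity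
  obtain ⟨M₂, hM₂pos, hM₂⟩ := hAvg G hG _ hε3pos
  refine ⟨max (max M₁ M₂) (max (max MK (N:ℝ)) 1),
    lt_of_lt_of_le one_pos ((le_max_right _ _).trans (le_max_right _ _)), ?_⟩
  intro t htM V hV hVM
  obtain ⟨hVmeas, hVfin⟩ := hex.1 V hV
  set m : ℝ := (μ V).toReal with hmdef
  have hm1 : (1:ℝ) ≤ m := le_trans ((le_max_right _ _).trans (le_max_right _ _)) hVM
  have hmpos : (0:ℝ) < m := lt_of_lt_of_le one_pos hm1
  have hmne : m ≠ 0 := hmpos.ne'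
  have htN : N ≤ t := by
    have h1 : (N:ℝ) ≤ (t:ℝ) :=
      le_trans (((le_max_right MK _).trans (le_max_left _ 1)).trans (le_max_right _ _)) htM
    exact_mod_cast h1
  have hM₁m : M₁ ≤ m := le_trans ((le_max_left M₁ M₂).trans (le_max_left _ _)) hVM
  have hM₂m : M₂ ≤ m := le_trans ((le_max_right M₁ M₂).trans (le_max_left _ _)) hVM
  have hMKm : MK ≤ m :=
    le_trans (((le_max_left MK (N:ℝ)).trans (le_max_left _ 1)).trans (le_max_right _ _)) hVM
  -- measurability / integrability
  have hTmeas : Measurable (T^[t]) := hT.measurable.iterate t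
  have hFTmeas : Measurable fun x => F (T^[t] x) := hFmeas.comp hTmeas
  have hFTbd : ∀ x, ‖F (T^[t] x)‖ ≤ C := fun x => hFbd _
  have hmulint : ∀ h : X → ℝ, Integrable h μ →
      Integrable (fun x => F (T^[t] x) * h x) μ := fun h hh =>
    hh.bdd_mul hFTmeas.aestronglyMeasurable (ae_of_all _ hFTbd)
  have hGintV : IntegrableOn G V μ := by
    apply Measure.integrableOn_of_bounded hVfin.ne hGmeas.aestronglyMeasurable
    exact ae_of_all _ fun x => hD₀ x
  have hHint : Integrable (Set.indicator V G) μ := hGintV.integrable_indicator hVmeas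
  have hSint : Integrable (fun x => ∑ j ∈ J V, g j x) μ :=
    integrable_finset_sum _ fun j _ => hgint j
  have hWint : Integrable (fun x => Set.indicator V G x - ∑ j ∈ J V, g j x) μ :=
    hHint.sub hSint
  set D : ℝ := ∫ x, |Set.indicator V G x - ∑ j ∈ J V, g j x| ∂μ with hDdef
  have hDnn : 0 ≤ D := integral_nonneg fun x => abs_nonneg _
  -- uniform M5 bound per j
  have hMj : ∀ j, |(∫ x, F (T^[t] x) * g j x ∂μ) - Avg F * ∫ x, g j x ∂μ|
      ≤ ε / (3 * K') * ∫ x, |g j x| ∂μ := by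
    intro j
    by_cases h0 : (∫ x, |g j x| ∂μ) = 0
    · have hj0 : g j =ᵐ[μ] 0 := by
        have h1 := (integral_eq_zero_iff_of_nonneg (fun x => abs_nonneg (g j x))
          (hgint j).abs).mp h0
        filter_upwards [h1] with x hx
        simpa using abs_eq_zero.mp hx
      have h1 : (∫ x, F (T^[t] x) * g j x ∂μ) = 0 := by
        have : (fun x => F (T^[t] x) * g j x) =ᵐ[μ] (fun _ => (0:ℝ)) := by
          filter_upwards [hj0] with x hx; simp [hx]
        rw [integral_congr_ae this]; simp
      have h2 : (∫ x, g j x ∂μ) = 0 := by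
        rw [integral_congr_ae hj0]; simp
      simp [h1, h2, h0]
    · have hlt := hN t htN (g j) (hg𝔏 j) h0
      have hpos : 0 < ∫ x, |g j x| ∂μ :=
        lt_of_le_of_ne (integral_nonneg fun x => abs_nonneg _) (Ne.symm h0)
      exact le_of_lt ((div_lt_iff₀ hpos).mp hlt)
  have hsum : |(∑ j ∈ J V, ∫ x, F (T^[t] x) * g j x ∂μ)
      - Avg F * ∑ j ∈ J V, ∫ x, g j x ∂μ|
      ≤ ε / (3 * K') * ∑ j ∈ J V, ∫ x, |g j x| ∂μ := by
    rw [Finset.mul_sum, ← Finset.sum_sub_distrib, Finset.mul_sum]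
    exact (Finset.abs_sum_le_sum_abs _ _).trans (Finset.sum_le_sum fun j _ => hMj j)
  have hLbd : (∑ j ∈ J V, ∫ x, |g j x| ∂μ) ≤ K' * m :=
    (hK V hV hMKm).trans (mul_le_mul_of_nonneg_right hKK' hmpos.le)
  have hS_eq : (∑ j ∈ J V, ∫ x, g j x ∂μ) = ∫ x, ∑ j ∈ J V, g j x ∂μ :=
    (integral_finset_sum _ fun j _ => hgint j).symm
  have hFS_eq : (∑ j ∈ J V, ∫ x, F (T^[t] x) * g j x ∂μ)
      = ∫ x, F (T^[t] x) * ∑ j ∈ J V, g j x ∂μ := by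
    rw [← integral_finset_sum _ fun j _ => hmulint _ (hgint j)]
    congr 1
    funext x
    rw [Finset.mul_sum]
  -- bound 1
  have hbd1 : |(∫ x, F (T^[t] x) * Set.indicator V G x ∂μ)
      - ∫ x, F (T^[t] x) * ∑ j ∈ J V, g j x ∂μ| ≤ C * D := by
    rw [← integral_sub (hmulint _ hHint) (hmulint _ hSint)]
    have heq : ∀ x, F (T^[t] x) * Set.indicator V G x - F (T^[t] x) * ∑ j ∈ J V, g j x
        = F (T^[t] x) * (Set.indicator V G x - ∑ j ∈ J V, g j x) := fun x => by ring
    simp_rw [heq]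
    refine le_trans (by
      simpa only [Real.norm_eq_abs] using norm_integral_le_integral_norm (μ := μ)
        (fun x => F (T^[t] x) * (Set.indicator V G x - ∑ j ∈ J V, g j x))) ?_
    rw [hDdef, ← integral_const_mul]
    refine integral_mono ((hmulint _ hWint).abs) (hWint.abs.const_mul C) fun x => ?_
    rw [abs_mul]
    exact mul_le_mul_of_nonneg_right (hFbd _) (abs_nonneg _)
  -- bound 3
  have hbd3 : |Avg F * (∫ x, ∑ j ∈ J V, g j x ∂μ)
      - Avg F * ∫ x, Set.indicator V G x ∂μ| ≤ A * D := by
    rw [← mul_sub, abs_mul, ← hAdef]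
    refine mul_le_mul_of_nonneg_left ?_ hAnn
    rw [← integral_sub hSint hHint]
    refine le_trans (by
      simpa only [Real.norm_eq_abs] using norm_integral_le_integral_norm (μ := μ)
        (fun x => (∑ j ∈ J V, g j x) - Set.indicator V G x)) ?_
    rw [hDdef]
    exact le_of_eq (integral_congr_ae (ae_of_all _ fun x => abs_sub_comm _ _))
  -- combine
  have hmain : |(∫ x, F (T^[t] x) * Set.indicator V G x ∂μ)
      - Avg F * ∫ x, Set.indicator V G x ∂μ|
      ≤ (C + A) * D + ε / (3 * K') * (K' * m) := by
    have htri : |(∫ x, F (T^[t] x) * Set.indicator V G x ∂μ)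
        - Avg F * ∫ x, Set.indicator V G x ∂μ|
        ≤ |(∫ x, F (T^[t] x) * Set.indicator V G x ∂μ)
            - ∫ x, F (T^[t] x) * ∑ j ∈ J V, g j x ∂μ|
          + |(∫ x, F (T^[t] x) * ∑ j ∈ J V, g j x ∂μ)
            - Avg F * ∫ x, ∑ j ∈ J V, g j x ∂μ|
          + |Avg F * (∫ x, ∑ j ∈ J V, g j x ∂μ)
            - Avg F * ∫ x, Set.indicator V G x ∂μ| := by
      have := abs_sub_le (∫ x, F (T^[t] x) * Set.indicator V G x ∂μ)
        (∫ x, F (T^[t] x) * ∑ j ∈ J V, g j x ∂μ)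
        (Avg F * ∫ x, Set.indicator V G x ∂μ)
      have h2 := abs_sub_le (∫ x, F (T^[t] x) * ∑ j ∈ J V, g j x ∂μ)
        (Avg F * ∫ x, ∑ j ∈ J V, g j x ∂μ)
        (Avg F * ∫ x, Set.indicator V G x ∂μ)
      linarith
    have hmid : |(∫ x, F (T^[t] x) * ∑ j ∈ J V, g j x ∂μ)
        - Avg F * ∫ x, ∑ j ∈ J V, g j x ∂μ| ≤ ε / (3 * K') * (K' * m) := by
      rw [← hFS_eq, ← hS_eq]
      exact hsum.trans (mul_le_mul_of_nonneg_left hLbd hε1pos.le)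
    nlinarith [hbd1, hbd3, htri, hmid]
  -- rewrite averages
  have havg1 : avgOn μ (fun x => F (T^[t] x) * G x) V
      = (∫ x, F (T^[t] x) * Set.indicator V G x ∂μ) / m := by
    unfold avgOn
    rw [← hmdef]
    congr 1
    rw [← integral_indicator hVmeas]
    congr 1
    funext x
    by_cases hx : x ∈ V <;> simp [hx]
  have havg2 : avgOn μ G V = (∫ x, Set.indicator V G x ∂μ) / m := by
    unfold avgOn
    rw [← hmdef, integral_indicator hVmeas]
  have hD_small : D / m < ε / (3 * (C + A + 1)) := by
    have := hM₁ V hV hM₁m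
    rw [sub_zero] at this
    calc D / m = |D / m| := (abs_of_nonneg (by positivity)).symm
      _ < _ := this
  have hG_small : |avgOn μ G V - Avg G| < ε / (3 * (A + 1)) := hM₂ V hV hM₂m
  rw [havg1]
  have hsplit : |(∫ x, F (T^[t] x) * Set.indicator V G x ∂μ) / m - Avg F * Avg G|
      ≤ (C + A) * (D / m) + ε / (3 * K') * K' + A * |avgOn μ G V - Avg G| := by
    have h1 : |(∫ x, F (T^[t] x) * Set.indicator V G x ∂μ) / m
        - Avg F * ((∫ x, Set.indicator V G x ∂μ) / m)|
        ≤ (C + A) * (D / m) + ε / (3 * K') * K' := by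
      rw [← mul_div_assoc, div_sub_div_same, abs_div, abs_of_pos hmpos]
      rw [div_le_iff₀ hmpos]
      calc |(∫ x, F (T^[t] x) * Set.indicator V G x ∂μ)
          - Avg F * ∫ x, Set.indicator V G x ∂μ|
          ≤ (C + A) * D + ε / (3 * K') * (K' * m) := hmain
        _ = ((C + A) * (D / m) + ε / (3 * K') * K') * m := by field_simp
    have h2 : |Avg F * ((∫ x, Set.indicator V G x ∂μ) / m) - Avg F * Avg G|
        = A * |avgOn μ G V - Avg G| := by
      rw [← mul_sub, abs_mul, ← hAdef, havg2]
    have h3 := abs_sub_le ((∫ x, F (T^[t] x) * Set.indicator V G x ∂μ) / m)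
      (Avg F * ((∫ x, Set.indicator V G x ∂μ) / m)) (Avg F * Avg G)
    linarith
  have hfin1 : (C + A) * (D / m) ≤ (C + A) * (ε / (3 * (C + A + 1))) :=
    mul_le_mul_of_nonneg_left hD_small.le (by positivity)
  have hfin2 : (C + A) * (ε / (3 * (C + A + 1))) < ε / 3 := by
    have hlt : (C + A) * (ε / (3 * (C + A + 1)))
        < (C + A + 1) * (ε / (3 * (C + A + 1))) := by
      apply mul_lt_mul_of_pos_right (by linarith) hε2pos
    have heq : (C + A + 1) * (ε / (3 * (C + A + 1))) = ε / 3 := by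
      field_simp
    linarith
  have hfin3 : ε / (3 * K') * K' = ε / 3 := by
    field_simp
  have hfin4 : A * |avgOn μ G V - Avg G| ≤ A * (ε / (3 * (A + 1))) :=
    mul_le_mul_of_nonneg_left hG_small.le hAnn
  have hfin5 : A * (ε / (3 * (A + 1))) ≤ ε / 3 := by
    have hle : A * (ε / (3 * (A + 1))) ≤ (A + 1) * (ε / (3 * (A + 1))) :=
      mul_le_mul_of_nonneg_right (by linarith) hε3pos.le
    have heq : (A + 1) * (ε / (3 * (A + 1))) = ε / 3 := by
      field_simp
    linarith
  calc |(∫ x, F (T^[t] x) * Set.indicator V G x ∂μ) / m - Avg F * Avg G|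
      ≤ (C + A) * (D / m) + ε / (3 * K') * K' + A * |avgOn μ G V - Avg G| := hsplit
    _ < ε := by rw [hfin3]; linarith
end
end

section
/- Let {p_β}_{β∈ℤ^d} be a probability distribution with finite second moment, such that the subgroup of ℤ^d generated by {β−β' : p_β>0, p_{β'}>0} is all of ℤ^d, and fix ε∈(0,1). Then there exists κ>0 such that, for all sufficiently large n, max over θ∈𝕋^d with |θ|≥n^{−(1−ε)/2} of |p̃(θ)|ⁿ is at most e^{−κ n^ε}. Here |θ| denotes the distance of θ from 0 in 𝕋^d and p̃(θ)=Σ_β p_β e^{iβ·θ}. -/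
noncomputable section

open Filter Topology

/-- The Fourier transform `ã(θ) = Σ_{β ∈ ℤ^d} a_β e^{i β·θ}` of a (summable) function
on `ℤ^d`, viewed as a `2π`-periodic function on `ℝ^d`. -/
def ftrans {d : ℕ} (a : (Fin d → ℤ) → ℝ) (θ : Fin d → ℝ) : ℂ :=
  ∑' β : Fin d → ℤ,
    (a β : ℂ) * Complex.exp (Complex.I * ((∑ i, (β i : ℝ) * θ i : ℝ) : ℂ))

namespace FT54

open Complex Finset

variable {d : ℕ}

/-- Integer-real dot product. -/
def dotZ (γ : Fin d → ℤ) (θ : Fin d → ℝ) : ℝ := ∑ i, (γ i : ℝ) * θ i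

/-- The character `e^{i γ·θ}`. -/
def ch (γ : Fin d → ℤ) (θ : Fin d → ℝ) : ℂ := Complex.exp (Complex.I * ((dotZ γ θ : ℝ) : ℂ))

lemma dotZ_add (γ γ' : Fin d → ℤ) (θ : Fin d → ℝ) :
    dotZ (γ + γ') θ = dotZ γ θ + dotZ γ' θ := by
  simp [dotZ, ← Finset.sum_add_distrib, add_mul]

lemma dotZ_neg (γ : Fin d → ℤ) (θ : Fin d → ℝ) : dotZ (-γ) θ = -(dotZ γ θ) := by
  simp [dotZ]

lemma dotZ_single (i : Fin d) (θ : Fin d → ℝ) : dotZ (Pi.single i 1) θ = θ i := by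
  simp [dotZ, Pi.single_apply, ite_mul]

lemma dotZ_smul (γ : Fin d → ℤ) (c : ℝ) (θ : Fin d → ℝ) :
    dotZ γ (c • θ) = c * dotZ γ θ := by
  simp only [dotZ, Pi.smul_apply, smul_eq_mul, Finset.mul_sum]
  exact Finset.sum_congr rfl fun i _ => by ring

lemma continuous_dotZ (γ : Fin d → ℤ) : Continuous fun θ : Fin d → ℝ => dotZ γ θ := by
  unfold dotZ
  exact continuous_finset_sum _ fun i _ => continuous_const.mul (continuous_apply i)

lemma abs_ch (γ : Fin d → ℤ) (θ : Fin d → ℝ) : ‖ch γ θ‖ = 1 := by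
  rw [ch, mul_comm, Complex.norm_exp_ofReal_mul_I]

lemma ch_add (γ γ' : Fin d → ℤ) (θ : Fin d → ℝ) : ch (γ + γ') θ = ch γ θ * ch γ' θ := by
  rw [ch, ch, ch, ← Complex.exp_add, dotZ_add]
  push_cast; ring_nf

lemma ch_zero (θ : Fin d → ℝ) : ch (0 : Fin d → ℤ) θ = 1 := by
  simp [ch, dotZ]

lemma ch_neg (γ : Fin d → ℤ) (θ : Fin d → ℝ) : ch (-γ) θ = (ch γ θ)⁻¹ := by
  rw [ch, ch, ← Complex.exp_neg, dotZ_neg]; push_cast; ring_nf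

lemma continuous_ch (γ : Fin d → ℤ) : Continuous fun θ : Fin d → ℝ => ch γ θ := by
  unfold ch
  exact Complex.continuous_exp.comp
    (continuous_const.mul (Complex.continuous_ofReal.comp (continuous_dotZ γ)))

/-- the subgroup of `γ` with `ch γ θ = 1` -/
def chKer (θ : Fin d → ℝ) : AddSubgroup (Fin d → ℤ) where
  carrier := {γ | ch γ θ = 1}
  zero_mem' := ch_zero θ
  add_mem' := by
    intro a b ha hb; simp only [Set.mem_setOf_eq] at *
    rw [ch_add, ha, hb, one_mul]
  neg_mem' := by
    intro a ha; simp only [Set.mem_setOf_eq] at *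
    rw [ch_neg, ha, inv_one]

/-- the subgroup of `γ` with `dotZ γ θ = 0` -/
def dotKer (θ : Fin d → ℝ) : AddSubgroup (Fin d → ℤ) where
  carrier := {γ | dotZ γ θ = 0}
  zero_mem' := by simp [dotZ]
  add_mem' := by
    intro a b ha hb; simp only [Set.mem_setOf_eq] at *
    rw [dotZ_add, ha, hb, add_zero]
  neg_mem' := by
    intro a ha; simp only [Set.mem_setOf_eq] at *
    rw [dotZ_neg, ha, neg_zero]

/-- Jordan-type bound: `|e^{ix} - 1|² ≥ (4/π²) x²` for `|x| ≤ π`. -/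
lemma jordan {x : ℝ} (hx : |x| ≤ Real.pi) :
    4 / Real.pi ^ 2 * x ^ 2 ≤ ‖Complex.exp (Complex.I * (x : ℂ)) - 1‖ ^ 2 := by
  have h1 : ‖Complex.exp (Complex.I * (x : ℂ)) - 1‖ ^ 2
      = 2 - 2 * Real.cos x := by
    rw [mul_comm, Complex.exp_mul_I, Complex.sq_norm, ← Complex.ofReal_cos, ← Complex.ofReal_sin]
    have : (Real.cos x : ℂ) + (Real.sin x : ℂ) * Complex.I - 1
        = ((Real.cos x - 1 : ℝ) : ℂ) + ((Real.sin x : ℝ) : ℂ) * Complex.I := by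
      push_cast; ring
    rw [this, Complex.normSq_add_mul_I]
    nlinarith [Real.sin_sq_add_cos_sq x]
  rw [h1]
  have h2 : Real.cos x = 1 - 2 * Real.sin (x / 2) ^ 2 := by
    have h := Real.cos_two_mul' (x / 2)
    have h' : 2 * (x / 2) = x := by ring
    rw [h'] at h
    nlinarith [Real.sin_sq_add_cos_sq (x / 2)]
  rw [h2]
  have hpi := Real.pi_pos
  have key : x ^ 2 / Real.pi ^ 2 ≤ Real.sin (x / 2) ^ 2 := by
    rcases le_total 0 x with hx0 | hx0
    · have hs := Real.mul_le_sin (x := x / 2) (by linarith)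
        (by rw [_root_.abs_of_nonneg hx0] at hx; linarith)
      have hs' : x / Real.pi ≤ Real.sin (x / 2) := by
        have : 2 / Real.pi * (x / 2) = x / Real.pi := by field_simp
        linarith [this ▸ hs]
      have hx0' : 0 ≤ x / Real.pi := by positivity
      calc x ^ 2 / Real.pi ^ 2 = (x / Real.pi) ^ 2 := by field_simp
        _ ≤ Real.sin (x / 2) ^ 2 := by nlinarith
    · have hs := Real.mul_le_sin (x := -x / 2) (by linarith)
        (by rw [_root_.abs_of_nonpos hx0] at hx; linarith)
      have hs' : -x / Real.pi ≤ Real.sin (-x / 2) := by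
        have : 2 / Real.pi * (-x / 2) = -x / Real.pi := by field_simp
        linarith [this ▸ hs]
      have hneg : Real.sin (-x / 2) = -Real.sin (x / 2) := by
        rw [neg_div, Real.sin_neg]
      rw [hneg] at hs'
      have hx0' : 0 ≤ -x / Real.pi := div_nonneg (by linarith) hpi.le
      calc x ^ 2 / Real.pi ^ 2 = (-x / Real.pi) ^ 2 := by rw [div_pow]; ring_nf
        _ ≤ Real.sin (x / 2) ^ 2 := by nlinarith
  have h3 : 4 / Real.pi ^ 2 * x ^ 2 = 4 * (x ^ 2 / Real.pi ^ 2) := by ring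
  rw [h3]
  nlinarith [key]

lemma exists_finset_closure {G : Type*} [AddCommGroup G] [DecidableEq G] {S : Set G} {x : G}
    (hx : x ∈ AddSubgroup.closure S) :
    ∃ T : Finset G, ↑T ⊆ S ∧ x ∈ AddSubgroup.closure (T : Set G) := by
  induction hx using AddSubgroup.closure_induction with
  | mem y hy => exact ⟨{y}, by simpa using hy, AddSubgroup.subset_closure (by simp)⟩
  | zero => exact ⟨∅, by simp, AddSubgroup.zero_mem _⟩
  | add y z hy hz ihy ihz =>
      obtain ⟨T₁, hT₁, hy'⟩ := ihy
      obtain ⟨T₂, hT₂, hz'⟩ := ihz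
      refine ⟨T₁ ∪ T₂, by simp [Finset.coe_union, Set.union_subset_iff, hT₁, hT₂], ?_⟩
      exact AddSubgroup.add_mem _
        (AddSubgroup.closure_mono (by simp [Finset.coe_union]) hy')
        (AddSubgroup.closure_mono (by simp [Finset.coe_union]) hz')
  | neg y hy ihy =>
      obtain ⟨T, hT, hy'⟩ := ihy
      exact ⟨T, hT, AddSubgroup.neg_mem _ hy'⟩

/-- Extract a finite subset of `S` whose closure contains all standard basis vectors. -/
lemma exists_genset {S : Set (Fin d → ℤ)} (hspan : AddSubgroup.closure S = ⊤) :
    ∃ T : Finset (Fin d → ℤ), ↑T ⊆ S ∧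
      ∀ i : Fin d, Pi.single i 1 ∈ AddSubgroup.closure ((T : Set (Fin d → ℤ))) := by
  have h : ∀ i : Fin d, ∃ T : Finset (Fin d → ℤ), ↑T ⊆ S ∧
      Pi.single i 1 ∈ AddSubgroup.closure ((T : Set (Fin d → ℤ))) := by
    intro i
    exact exists_finset_closure (by rw [hspan]; trivial)
  choose T hTS hTmem using h
  refine ⟨Finset.univ.biUnion T, ?_, ?_⟩
  · intro γ hγ
    simp only [Finset.coe_biUnion, Set.mem_iUnion, Finset.mem_coe] at hγ
    obtain ⟨i, _, hi⟩ := hγ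
    exact hTS i hi
  · intro i
    refine AddSubgroup.closure_mono ?_ (hTmem i)
    intro γ hγ
    simp only [Finset.mem_coe, Finset.coe_biUnion, Set.mem_iUnion]
    exact ⟨i, by simp, by exact_mod_cast hγ⟩

lemma ftrans_eq (p : (Fin d → ℤ) → ℝ) (θ : Fin d → ℝ) :
    ftrans p θ = ∑' β : Fin d → ℤ, (p β : ℂ) * ch β θ := rfl

variable {p : (Fin d → ℤ) → ℝ}

lemma summable_term (hnn : ∀ β, 0 ≤ p β) (hsum : HasSum p 1) (θ : Fin d → ℝ) :
    Summable fun β : Fin d → ℤ => (p β : ℂ) * ch β θ := by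
  apply Summable.of_norm
  have : (fun β : Fin d → ℤ => ‖(p β : ℂ) * ch β θ‖) = p := by
    funext β
    rw [norm_mul, abs_ch, mul_one,
      Complex.norm_real, Real.norm_eq_abs, _root_.abs_of_nonneg (hnn β)]
  rw [this]
  exact hsum.summable

lemma pair_bound (hnn : ∀ β, 0 ≤ p β) (hsum : HasSum p 1)
    (β₀ β₁ : Fin d → ℤ) (h0 : 0 < p β₀) (h1 : 0 < p β₁) (θ : Fin d → ℝ) :
    ‖ftrans p θ‖
      ≤ 1 - min (p β₀) (p β₁) / 4 * ‖ch (β₀ - β₁) θ - 1‖ ^ 2 := by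
  by_cases hne : β₀ = β₁
  · subst hne
    simp only [sub_self, ch_zero, sub_self, norm_zero]
    rw [ftrans_eq]
    have h1 : ‖∑' β : Fin d → ℤ, (p β : ℂ) * ch β θ‖ ≤ ∑' β : Fin d → ℤ, ‖(p β : ℂ) * ch β θ‖ :=
      norm_tsum_le_tsum_norm (by
        have : (fun β : Fin d → ℤ => ‖(p β : ℂ) * ch β θ‖) = p := by
          funext β
          rw [norm_mul, abs_ch, mul_one,
            Complex.norm_real, Real.norm_eq_abs, _root_.abs_of_nonneg (hnn β)]
        rw [this]; exact hsum.summable)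
    have h2 : (fun β : Fin d → ℤ => ‖(p β : ℂ) * ch β θ‖) = p := by
      funext β
      rw [norm_mul, abs_ch, mul_one,
        Complex.norm_real, Real.norm_eq_abs, _root_.abs_of_nonneg (hnn β)]
    rw [h2, hsum.tsum_eq] at h1
    simpa using h1
  set F := ftrans p θ with hF
  set w : ℂ := if h : F = 0 then 1 else F / (‖F‖ : ℂ) with hw
  have habsw : ‖w‖ = 1 := by
    rw [hw]
    split_ifs with h
    · simp
    · rw [norm_div, Complex.norm_real, Real.norm_eq_abs, _root_.abs_of_nonneg (norm_nonneg F),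
        div_self (by simpa using h)]
  have hwF : ((starRingEnd ℂ) w * F).re = ‖F‖ := by
    rw [hw]
    split_ifs with h
    · simp [h]
    · have habs : (‖F‖ : ℝ) ≠ 0 := by simpa using h
      rw [map_div₀, Complex.conj_ofReal]
      have : (starRingEnd ℂ) F / (‖F‖ : ℂ) * F
          = ((Complex.normSq F : ℝ) : ℂ) / (‖F‖ : ℂ) := by
        rw [div_mul_eq_mul_div, mul_comm, Complex.mul_conj]
      rw [this, Complex.div_ofReal_re, Complex.ofReal_re, Complex.normSq_eq_norm_sq]
      field_simp
  set r : (Fin d → ℤ) → ℝ := fun β => ((starRingEnd ℂ) w * ch β θ).re with hr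
  have hr_le : ∀ β, r β ≤ 1 := by
    intro β
    calc r β ≤ ‖(starRingEnd ℂ) w * ch β θ‖ := Complex.re_le_norm _
    _ = 1 := by rw [norm_mul, Complex.norm_conj, habsw, abs_ch, mul_one]
  have hr_ge : ∀ β, -1 ≤ r β := by
    intro β
    have habs := Complex.abs_re_le_norm ((starRingEnd ℂ) w * ch β θ)
    have h2 : ‖(starRingEnd ℂ) w * ch β θ‖ = 1 := by
      rw [norm_mul, Complex.norm_conj, habsw, abs_ch, mul_one]
    rw [h2] at habs
    cases' abs_le.mp habs with h _
    linarith
  have hkey : ‖F‖ = ∑' β, p β * r β := by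
    rw [← hwF, hF, ftrans_eq]
    rw [← tsum_mul_left]
    rw [Complex.re_tsum ((summable_term hnn hsum θ).mul_left _)]
    congr 1
    funext β
    rw [hr]
    have : (starRingEnd ℂ) w * ((p β : ℂ) * ch β θ)
        = (p β : ℂ) * ((starRingEnd ℂ) w * ch β θ) := by ring
    rw [this, Complex.re_ofReal_mul]
  have hsum_pr : Summable fun β => p β * r β := by
    apply Summable.of_norm
    apply Summable.of_nonneg_of_le (fun β => norm_nonneg _) (fun β => ?_) hsum.summable
    rw [Real.norm_eq_abs, abs_mul, _root_.abs_of_nonneg (hnn β)]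
    have : |r β| ≤ 1 := abs_le.mpr ⟨hr_ge β, hr_le β⟩
    nlinarith [hnn β]
  have hsum_p1r : Summable fun β => p β * (1 - r β) := by
    have : (fun β => p β * (1 - r β)) = fun β => p β - p β * r β := by funext β; ring
    rw [this]
    exact hsum.summable.sub hsum_pr
  have hsplit : ∑' β, p β * r β = 1 - ∑' β, p β * (1 - r β) := by
    have h1 : ∑' β, p β * (1 - r β) = (∑' β, p β) - ∑' β, p β * r β := by
      rw [← Summable.tsum_sub hsum.summable hsum_pr]
      congr 1; funext β; ring
    rw [h1, hsum.tsum_eq]; ring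
  have hterm_nonneg : ∀ β, 0 ≤ p β * (1 - r β) := fun β =>
    mul_nonneg (hnn β) (by linarith [hr_le β])
  have hpair : p β₀ * (1 - r β₀) + p β₁ * (1 - r β₁) ≤ ∑' β, p β * (1 - r β) := by
    have := Summable.sum_le_tsum (({β₀, β₁} : Finset (Fin d → ℤ)))
      (fun β _ => hterm_nonneg β) hsum_p1r
    rwa [Finset.sum_pair hne] at this
  have hone_sub : ∀ β, 1 - r β = ‖w - ch β θ‖ ^ 2 / 2 := by
    intro β
    rw [Complex.sq_norm, Complex.normSq_sub, Complex.normSq_eq_norm_sq, Complex.normSq_eq_norm_sq,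
      habsw, abs_ch]
    have : (w * (starRingEnd ℂ) (ch β θ)).re = r β := by
      calc (w * (starRingEnd ℂ) (ch β θ)).re
          = ((starRingEnd ℂ) ((starRingEnd ℂ) w * ch β θ)).re := by
            rw [map_mul, Complex.conj_conj]
        _ = r β := Complex.conj_re _
    rw [this]; ring
  set a := ‖w - ch β₀ θ‖ with ha
  set b := ‖w - ch β₁ θ‖ with hb
  set D := ‖ch (β₀ - β₁) θ - 1‖ with hD
  have hz : ch β₀ θ - ch β₁ θ = ch β₁ θ * (ch (β₀ - β₁) θ - 1) := by
    have : β₁ + (β₀ - β₁) = β₀ := by ring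
    rw [mul_sub, mul_one, ← ch_add, this]
  have hDab : D ≤ a + b := by
    have h1 : ‖ch β₀ θ - ch β₁ θ‖ = D := by
      rw [hz, norm_mul, abs_ch, one_mul]
    have h2 : ‖ch β₀ θ - ch β₁ θ‖
        ≤ ‖ch β₀ θ - w‖ + ‖w - ch β₁ θ‖ :=
      norm_sub_le_norm_sub_add_norm_sub _ _ _
    have h3 : ‖ch β₀ θ - w‖ = a := by rw [ha, norm_sub_rev]
    rw [h1, h3] at h2
    exact h2
  have ha0 : 0 ≤ a := norm_nonneg _
  have hb0 : 0 ≤ b := norm_nonneg _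
  have hD0 : 0 ≤ D := norm_nonneg _
  set c := min (p β₀) (p β₁) with hc
  have hc0 : 0 < c := lt_min h0 h1
  have hc1 : c ≤ p β₀ := min_le_left _ _
  have hc2 : c ≤ p β₁ := min_le_right _ _
  have hfin : ‖F‖ ≤ 1 - (p β₀ * (a ^ 2 / 2) + p β₁ * (b ^ 2 / 2)) := by
    rw [hkey, hsplit]
    have e0 : 1 - r β₀ = a ^ 2 / 2 := hone_sub β₀
    have e1 : 1 - r β₁ = b ^ 2 / 2 := hone_sub β₁
    rw [e0, e1] at hpair
    linarith
  have hmain : c / 4 * D ^ 2 ≤ p β₀ * (a ^ 2 / 2) + p β₁ * (b ^ 2 / 2) := by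
    nlinarith [mul_le_mul_of_nonneg_left (mul_self_le_mul_self hD0 hDab) hc0.le,
      mul_nonneg hc0.le (sq_nonneg (a - b)),
      mul_le_mul_of_nonneg_right hc1 (sq_nonneg a),
      mul_le_mul_of_nonneg_right hc2 (sq_nonneg b)]
  linarith

/-- positive-definiteness of the quadratic form `θ ↦ ∑_{γ ∈ T} (γ·θ)²`. -/
lemma quad_lower (hd : 1 ≤ d) (T : Finset (Fin d → ℤ))
    (hT : ∀ i : Fin d, Pi.single i 1 ∈ AddSubgroup.closure ((T : Set (Fin d → ℤ)))) :
    ∃ lam : ℝ, 0 < lam ∧ ∀ θ : Fin d → ℝ,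
      lam * (∑ i, θ i ^ 2) ≤ ∑ γ ∈ T, dotZ γ θ ^ 2 := by
  set q : (Fin d → ℝ) → ℝ := fun θ => ∑ γ ∈ T, dotZ γ θ ^ 2 with hq
  have hqcont : Continuous q :=
    continuous_finset_sum _ fun γ _ => (continuous_dotZ γ).pow 2
  have hqnn : ∀ θ, 0 ≤ q θ := fun θ => Finset.sum_nonneg fun γ _ => sq_nonneg _
  have hqpos : ∀ θ : Fin d → ℝ, θ ≠ 0 → 0 < q θ := by
    intro θ hθ
    rcases (hqnn θ).lt_or_eq with h | h
    · exact h
    exfalso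
    have hzero : ∀ γ ∈ T, dotZ γ θ = 0 := by
      intro γ hγ
      have := (Finset.sum_eq_zero_iff_of_nonneg (fun γ _ => sq_nonneg (dotZ γ θ))).mp h.symm γ hγ
      exact pow_eq_zero_iff (two_ne_zero) |>.mp this
    have hsub : (T : Set (Fin d → ℤ)) ⊆ (dotKer θ : Set (Fin d → ℤ)) := fun γ hγ =>
      hzero γ hγ
    have hsingle : ∀ i, Pi.single i 1 ∈ dotKer θ := fun i =>
      (AddSubgroup.closure_le (dotKer θ)).mpr hsub (hT i)
    apply hθ
    funext i
    have := hsingle i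
    change dotZ (Pi.single i 1) θ = 0 at this
    rwa [dotZ_single] at this
  set S1 : Set (Fin d → ℝ) := {θ | ∑ i, θ i ^ 2 = 1} with hS1
  have hS1closed : IsClosed S1 :=
    isClosed_eq (continuous_finset_sum _ fun i _ => (continuous_apply i).pow 2) continuous_const
  have hS1sub : S1 ⊆ Metric.closedBall 0 1 := by
    intro θ hθ
    rw [Metric.mem_closedBall, dist_zero_right]
    rw [pi_norm_le_iff_of_nonneg zero_le_one]
    intro i
    rw [Real.norm_eq_abs, ← Real.sqrt_one, ← Real.sqrt_sq_eq_abs]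
    apply Real.sqrt_le_sqrt
    rw [← hθ]
    exact Finset.single_le_sum (fun j _ => sq_nonneg (θ j)) (Finset.mem_univ i)
  have hS1cpt : IsCompact S1 :=
    (isCompact_closedBall (0 : Fin d → ℝ) 1).of_isClosed_subset hS1closed hS1sub
  have hS1ne : S1.Nonempty := by
    refine ⟨Pi.single ⟨0, hd⟩ 1, ?_⟩
    simp only [hS1, Set.mem_setOf_eq, Pi.single_apply]
    rw [Finset.sum_eq_single (⟨0, hd⟩ : Fin d)]
    · simp
    · intro j _ hj; simp [hj]
    · simp
  obtain ⟨θ₀, hθ₀S, hθ₀min'⟩ := hS1cpt.exists_isMinOn hS1ne hqcont.continuousOn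
  have hθ₀min : ∀ θ ∈ S1, q θ₀ ≤ q θ := fun θ hθ => hθ₀min' hθ
  refine ⟨q θ₀, ?_, ?_⟩
  · apply hqpos
    intro h
    rw [hS1, Set.mem_setOf_eq, h] at hθ₀S
    simp at hθ₀S
  · intro θ
    by_cases hθ : θ = 0
    · subst hθ; simp [hq, dotZ]
    · set s := Real.sqrt (∑ i, θ i ^ 2) with hs
      have hsum_pos : 0 < ∑ i, θ i ^ 2 := by
        rcases (Finset.sum_nonneg fun i _ => sq_nonneg (θ i)).lt_or_eq with h | h
        · exact h
        exfalso; apply hθ; funext i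
        have := (Finset.sum_eq_zero_iff_of_nonneg (fun i _ => sq_nonneg (θ i))).mp h.symm i
          (Finset.mem_univ i)
        exact pow_eq_zero_iff (two_ne_zero) |>.mp this
      have hspos : 0 < s := Real.sqrt_pos.mpr hsum_pos
      have hs2 : s ^ 2 = ∑ i, θ i ^ 2 := Real.sq_sqrt hsum_pos.le
      have hmem : s⁻¹ • θ ∈ S1 := by
        simp only [hS1, Set.mem_setOf_eq, Pi.smul_apply, smul_eq_mul, mul_pow]
        rw [← Finset.mul_sum, ← hs2]
        field_simp
      have hle := hθ₀min _ hmem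
      have hqsmul : q (s⁻¹ • θ) = s⁻¹ ^ 2 * q θ := by
        simp only [hq, Finset.mul_sum]
        exact Finset.sum_congr rfl fun γ _ => by rw [dotZ_smul]; ring
      rw [hqsmul] at hle
      have hfin := mul_le_mul_of_nonneg_left hle (sq_nonneg s)
      rw [← mul_assoc] at hfin
      have hss : s ^ 2 * s⁻¹ ^ 2 = 1 := by field_simp
      rw [hss, one_mul] at hfin
      calc q θ₀ * (∑ i, θ i ^ 2) = q θ₀ * s ^ 2 := by rw [hs2]
        _ = s ^ 2 * q θ₀ := by ring
        _ ≤ q θ := hfin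

end FT54

set_option maxHeartbeats 1600000 in
/-- Lemma 5.4 -/
theorem ft_power_decay (d : ℕ) (hd : 1 ≤ d) (p : (Fin d → ℤ) → ℝ)
    (hnn : ∀ β, 0 ≤ p β) (hsum : HasSum p 1)
    (hmom : Summable fun β : Fin d → ℤ => (∑ i, ((β i : ℝ)) ^ 2) * p β)
    (hspan : AddSubgroup.closure
      {γ : Fin d → ℤ | ∃ β β', 0 < p β ∧ 0 < p β' ∧ γ = β - β'} = ⊤)
    (ε : ℝ) (hε : ε ∈ Set.Ioo (0 : ℝ) 1) :
    ∃ κ : ℝ, 0 < κ ∧ ∃ N : ℕ, ∀ n : ℕ, N ≤ n → ∀ θ : Fin d → ℝ,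
      (∀ i, θ i ∈ Set.Ioc (-Real.pi) Real.pi) →
      (n : ℝ) ^ (-(1 - ε) / 2) ≤ Real.sqrt (∑ i, (θ i) ^ 2) →
      ‖ftrans p θ‖ ^ n ≤ Real.exp (-κ * (n : ℝ) ^ ε) := by
  classical
  open FT54 in
  obtain ⟨hε0, hε1⟩ := hε
  have hpi := Real.pi_pos
  obtain ⟨T, hTS, hT⟩ := FT54.exists_genset hspan
  -- T is nonempty
  have hTne : T.Nonempty := by
    rw [← Finset.coe_nonempty]
    by_contra h
    rw [Set.not_nonempty_iff_eq_empty] at h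
    have h1 := hT ⟨0, hd⟩
    rw [h] at h1
    rw [AddSubgroup.closure_empty, AddSubgroup.mem_bot] at h1
    have := congrFun h1 ⟨0, hd⟩
    simp at this
  set m : ℝ := (T.card : ℝ) with hm
  have hm0 : 0 < m := by
    rw [hm]
    exact_mod_cast Finset.card_pos.mpr hTne
  -- choose pairs for each γ ∈ T
  have hpairs : ∀ γ ∈ T, ∃ β β', 0 < p β ∧ 0 < p β' ∧ γ = β - β' := fun γ hγ => hTS hγ
  choose! B B' hB hB' hBB' using hpairs
  -- uniform positive weight
  set c : ℝ := (T.image fun γ => min (p (B γ)) (p (B' γ))).min' (hTne.image _) with hcdef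
  have hc0 : 0 < c := by
    have hmem := (T.image fun γ => min (p (B γ)) (p (B' γ))).min'_mem (hTne.image _)
    rw [Finset.mem_image] at hmem
    obtain ⟨γ, hγ, hEq⟩ := hmem
    rw [hcdef, ← hEq]
    exact lt_min (hB γ hγ) (hB' γ hγ)
  have hc_le : ∀ γ ∈ T, c ≤ min (p (B γ)) (p (B' γ)) := by
    intro γ hγ
    rw [hcdef]
    exact Finset.min'_le _ _ (Finset.mem_image_of_mem (fun γ => min (p (B γ)) (p (B' γ))) hγ)
  -- the key one-character bound
  have key : ∀ (θ : Fin d → ℝ), ∀ γ ∈ T,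
      ‖ftrans p θ‖ ≤ 1 - c / 4 * ‖FT54.ch γ θ - 1‖ ^ 2 := by
    intro θ γ hγ
    have h := FT54.pair_bound hnn hsum (B γ) (B' γ) (hB γ hγ) (hB' γ hγ) θ
    rw [← hBB' γ hγ] at h
    have hX : (0:ℝ) ≤ ‖FT54.ch γ θ - 1‖ ^ 2 := sq_nonneg _
    have hle := hc_le γ hγ
    nlinarith [h]
  -- quadratic form lower bound
  obtain ⟨lam, hlam, hquad⟩ := FT54.quad_lower hd T hT
  -- bound on the sizes of elements of T
  set M : ℝ := (T.image fun γ => ∑ i, ((γ i : ℝ)) ^ 2).max' (hTne.image _) with hMdef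
  have hM0 : 0 ≤ M := by
    have hmem := (T.image fun γ => ∑ i, ((γ i : ℝ)) ^ 2).max'_mem (hTne.image _)
    rw [Finset.mem_image] at hmem
    obtain ⟨γ, hγ, hEq⟩ := hmem
    rw [hMdef, ← hEq]
    exact Finset.sum_nonneg fun i _ => sq_nonneg _
  have hM_le : ∀ γ ∈ T, (∑ i, ((γ i : ℝ)) ^ 2) ≤ M := by
    intro γ hγ
    rw [hMdef]
    exact Finset.le_max' _ _ (Finset.mem_image_of_mem (fun γ => ∑ i, ((γ i : ℝ)) ^ 2) hγ)
  -- Cauchy-Schwarz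
  have hCS : ∀ γ ∈ T, ∀ θ : Fin d → ℝ, FT54.dotZ γ θ ^ 2 ≤ M * ∑ i, θ i ^ 2 := by
    intro γ hγ θ
    have h := Finset.sum_mul_sq_le_sq_mul_sq Finset.univ (fun i => ((γ i : ℝ))) θ
    calc FT54.dotZ γ θ ^ 2 ≤ (∑ i, ((γ i : ℝ)) ^ 2) * ∑ i, θ i ^ 2 := h
      _ ≤ M * ∑ i, θ i ^ 2 := by
          apply mul_le_mul_of_nonneg_right (hM_le γ hγ)
          exact Finset.sum_nonneg fun i _ => sq_nonneg _
  -- choice of δ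
  set δ : ℝ := Real.pi / (Real.sqrt M + 1) with hδdef
  have hsqrtM : 0 ≤ Real.sqrt M := Real.sqrt_nonneg _
  have hδ0 : 0 < δ := div_pos hpi (by linarith)
  -- small-θ bound
  set C0 : ℝ := c * lam / (Real.pi ^ 2 * m) with hC0def
  have hC00 : 0 < C0 := div_pos (mul_pos hc0 hlam) (mul_pos (by positivity) hm0)
  set C : ℝ := min C0 (δ ^ 2)⁻¹ with hCdef
  have hC0' : 0 < C := lt_min hC00 (by positivity)
  have hCδ : C * δ ^ 2 ≤ 1 := by
    have : C ≤ (δ ^ 2)⁻¹ := min_le_right _ _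
    calc C * δ ^ 2 ≤ (δ ^ 2)⁻¹ * δ ^ 2 := by
          apply mul_le_mul_of_nonneg_right this (sq_nonneg _)
      _ = 1 := by field_simp
  have small : ∀ θ : Fin d → ℝ, (∑ i, θ i ^ 2) ≤ δ ^ 2 →
      ‖ftrans p θ‖ ≤ 1 - C * ∑ i, θ i ^ 2 := by
    intro θ hθ
    set t := ∑ i, θ i ^ 2 with htdef
    have ht0 : 0 ≤ t := Finset.sum_nonneg fun i _ => sq_nonneg _
    -- find γ with a large dot product
    have hsum_ge : ∑ γ ∈ T, (lam * t / m) ≤ ∑ γ ∈ T, FT54.dotZ γ θ ^ 2 := by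
      rw [Finset.sum_const]
      have hcard : (T.card : ℝ) = m := rfl
      have : (T.card : ℝ) * (lam * t / m) = lam * t := by
        rw [hcard]; field_simp
      rw [nsmul_eq_mul, this]
      exact hquad θ
    obtain ⟨γ, hγT, hγ⟩ := Finset.exists_le_of_sum_le (f := fun _ => lam * t / m)
      (g := fun γ => FT54.dotZ γ θ ^ 2) hTne hsum_ge
    -- |dot| ≤ π
    have hdot2 : FT54.dotZ γ θ ^ 2 ≤ Real.pi ^ 2 := by
      have h1 : FT54.dotZ γ θ ^ 2 ≤ M * t := hCS γ hγT θ
      have h2 : M * t ≤ M * δ ^ 2 := mul_le_mul_of_nonneg_left hθ hM0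
      have h3 : M * δ ^ 2 ≤ Real.pi ^ 2 := by
        rw [hδdef, div_pow]
        have hM_le_sq : M ≤ (Real.sqrt M + 1) ^ 2 := by
          nlinarith [Real.sq_sqrt hM0, Real.sqrt_nonneg M]
        have hden : (0:ℝ) < (Real.sqrt M + 1) ^ 2 := by positivity
        calc M * (Real.pi ^ 2 / (Real.sqrt M + 1) ^ 2)
            ≤ (Real.sqrt M + 1) ^ 2 * (Real.pi ^ 2 / (Real.sqrt M + 1) ^ 2) := by
              apply mul_le_mul_of_nonneg_right hM_le_sq (by positivity)
          _ = Real.pi ^ 2 := by field_simp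
      linarith
    have hdot_abs : |FT54.dotZ γ θ| ≤ Real.pi := by
      rw [← Real.sqrt_sq_eq_abs, ← Real.sqrt_sq hpi.le]
      exact Real.sqrt_le_sqrt hdot2
    have hjord := FT54.jordan hdot_abs
    have hkey := key θ γ hγT
    have hch : ‖FT54.ch γ θ - 1‖ ^ 2
        ≥ 4 / Real.pi ^ 2 * FT54.dotZ γ θ ^ 2 := hjord
    -- combine
    have hCle : C ≤ C0 := min_le_left _ _
    have step : c / 4 * (4 / Real.pi ^ 2 * (lam * t / m))
        ≤ c / 4 * ‖FT54.ch γ θ - 1‖ ^ 2 := by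
      apply mul_le_mul_of_nonneg_left _ (by linarith)
      calc 4 / Real.pi ^ 2 * (lam * t / m) ≤ 4 / Real.pi ^ 2 * FT54.dotZ γ θ ^ 2 := by
            apply mul_le_mul_of_nonneg_left hγ (by positivity)
        _ ≤ ‖FT54.ch γ θ - 1‖ ^ 2 := hjord
    have heq : c / 4 * (4 / Real.pi ^ 2 * (lam * t / m)) = C0 * t := by
      rw [hC0def]; field_simp
    have : ‖ftrans p θ‖ ≤ 1 - C0 * t := by
      rw [← heq]; linarith
    have hCt : C * t ≤ C0 * t := mul_le_mul_of_nonneg_right hCle ht0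
    linarith
  -- far regime
  have far : ∃ ρ : ℝ, 0 < ρ ∧ ∀ θ : Fin d → ℝ, (∀ i, |θ i| ≤ Real.pi) →
      δ ^ 2 ≤ ∑ i, θ i ^ 2 → ‖ftrans p θ‖ ≤ 1 - ρ := by
    set g : (Fin d → ℝ) → ℝ := fun θ => ∑ γ ∈ T, ‖FT54.ch γ θ - 1‖ ^ 2 with hgdef
    have hgcont : Continuous g := by
      apply continuous_finset_sum
      intro γ _
      exact ((continuous_norm.comp ((FT54.continuous_ch γ).sub continuous_const)).pow 2)
    have hgnn : ∀ θ, 0 ≤ g θ := fun θ => Finset.sum_nonneg fun γ _ => sq_nonneg _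
    set K : Set (Fin d → ℝ) := {θ | (∀ i, |θ i| ≤ Real.pi) ∧ δ ^ 2 ≤ ∑ i, θ i ^ 2} with hKdef
    rcases Set.eq_empty_or_nonempty K with hK | hKne
    · refine ⟨1/2, by norm_num, ?_⟩
      intro θ h1 h2
      exfalso
      have : θ ∈ K := ⟨h1, h2⟩
      rw [hK] at this
      exact this
    · have hKclosed : IsClosed K := by
        have : K = (⋂ i, {θ : Fin d → ℝ | |θ i| ≤ Real.pi})
            ∩ {θ : Fin d → ℝ | δ ^ 2 ≤ ∑ i, θ i ^ 2} := by
          ext θ; simp [hKdef, Set.mem_iInter]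
        rw [this]
        apply IsClosed.inter
        · exact isClosed_iInter fun i =>
            isClosed_le ((continuous_apply i).abs) continuous_const
        · exact isClosed_le continuous_const
            (continuous_finset_sum _ fun i _ => (continuous_apply i).pow 2)
      have hKsub : K ⊆ Metric.closedBall 0 Real.pi := by
        intro θ hθ
        rw [Metric.mem_closedBall, dist_zero_right]
        rw [pi_norm_le_iff_of_nonneg hpi.le]
        intro i
        exact hθ.1 i
      have hKcpt : IsCompact K :=
        (isCompact_closedBall (0 : Fin d → ℝ) Real.pi).of_isClosed_subset hKclosed hKsub
      obtain ⟨θ₀, hθ₀K, hθ₀min'⟩ := hKcpt.exists_isMinOn hKne hgcont.continuousOn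
      have hθ₀min : ∀ θ ∈ K, g θ₀ ≤ g θ := fun θ hθ => hθ₀min' hθ
      set η : ℝ := g θ₀ with hηdef
      -- η > 0
      have hθ₀ne : θ₀ ≠ 0 := by
        intro h
        have h2 : δ ^ 2 ≤ ∑ i, θ₀ i ^ 2 := hθ₀K.2
        have hzero : ∑ i, θ₀ i ^ 2 = 0 := by rw [h]; simp
        rw [hzero] at h2
        nlinarith [hδ0]
      have hγ₀ : ∃ γ₀ ∈ T, FT54.ch γ₀ θ₀ ≠ 1 := by
        by_contra h
        push_neg at h
        have hsub : (T : Set (Fin d → ℤ)) ⊆ (FT54.chKer θ₀ : Set (Fin d → ℤ)) := fun γ hγ =>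
          h γ hγ
        have hsingle : ∀ i, Pi.single i 1 ∈ FT54.chKer θ₀ := fun i =>
          (AddSubgroup.closure_le (FT54.chKer θ₀)).mpr hsub (hT i)
        apply hθ₀ne
        funext i
        have hmem := hsingle i
        change FT54.ch (Pi.single i 1) θ₀ = 1 at hmem
        rw [FT54.ch, FT54.dotZ_single] at hmem
        rw [Complex.exp_eq_one_iff] at hmem
        obtain ⟨k, hk⟩ := hmem
        have hIne : (Complex.I : ℂ) ≠ 0 := Complex.I_ne_zero
        have hθi : (θ₀ i : ℂ) = k * (2 * Real.pi) := by
          have : Complex.I * (θ₀ i : ℂ) = Complex.I * (k * (2 * Real.pi)) := by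
            rw [hk]; ring
          exact mul_left_cancel₀ hIne this
        have hθi' : θ₀ i = k * (2 * Real.pi) := by
          exact_mod_cast hθi
        have habs := hθ₀K.1 i
        rw [hθi'] at habs ⊢
        have hk0 : k = 0 := by
          by_contra hk0
          have : (1:ℝ) ≤ |(k:ℝ)| := by
            exact_mod_cast Int.one_le_abs hk0
          rw [abs_mul] at habs
          have : |(k:ℝ)| * |2 * Real.pi| ≥ 1 * (2 * Real.pi) := by
            rw [abs_of_pos (by linarith : (0:ℝ) < 2 * Real.pi)]
            apply mul_le_mul_of_nonneg_right this (by linarith)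
          linarith
        rw [hk0]
        simp
      obtain ⟨γ₀, hγ₀T, hγ₀ne⟩ := hγ₀
      have hη0 : 0 < η := by
        rw [hηdef, hgdef]
        have h1 : 0 < ‖FT54.ch γ₀ θ₀ - 1‖ ^ 2 := by
          apply pow_pos
          rw [norm_pos_iff]
          exact sub_ne_zero.mpr hγ₀ne
        calc (0:ℝ) < ‖FT54.ch γ₀ θ₀ - 1‖ ^ 2 := h1
          _ ≤ ∑ γ ∈ T, ‖FT54.ch γ θ₀ - 1‖ ^ 2 :=
            Finset.single_le_sum (f := fun γ => ‖FT54.ch γ θ₀ - 1‖ ^ 2)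
              (fun γ _ => sq_nonneg _) hγ₀T
      refine ⟨c / 4 * (η / m), mul_pos (by linarith) (div_pos hη0 hm0), ?_⟩
      intro θ h1 h2
      have hθK : θ ∈ K := ⟨h1, h2⟩
      have hgθ : η ≤ g θ := hθ₀min θ hθK
      have hsum_ge : ∑ γ ∈ T, (η / m) ≤ ∑ γ ∈ T, ‖FT54.ch γ θ - 1‖ ^ 2 := by
        rw [Finset.sum_const, nsmul_eq_mul]
        have hcard : (T.card : ℝ) = m := rfl
        rw [hcard]
        have : m * (η / m) = η := by field_simp
        rw [this]
        exact hgθ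
      obtain ⟨γ, hγT, hγ⟩ := Finset.exists_le_of_sum_le (f := fun _ => η / m)
        (g := fun γ => ‖FT54.ch γ θ - 1‖ ^ 2) hTne hsum_ge
      have hkeyθ := key θ γ hγT
      have : c / 4 * (η / m) ≤ c / 4 * ‖FT54.ch γ θ - 1‖ ^ 2 :=
        mul_le_mul_of_nonneg_left hγ (by linarith)
      linarith
  obtain ⟨ρ, hρ0, hfar⟩ := far
  -- conclusion
  refine ⟨min C ρ, lt_min hC0' hρ0, 1, ?_⟩
  intro n hn θ hθcube hrad
  set t := ∑ i, θ i ^ 2 with htdef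
  have ht0 : 0 ≤ t := Finset.sum_nonneg fun i _ => sq_nonneg _
  have hn1 : (1:ℝ) ≤ (n:ℝ) := by exact_mod_cast hn
  have hnpos : (0:ℝ) < (n:ℝ) := by linarith
  have habs0 : 0 ≤ ‖ftrans p θ‖ := norm_nonneg _
  set κ := min C ρ with hκdef
  have hκC : κ ≤ C := min_le_left _ _
  have hκρ : κ ≤ ρ := min_le_right _ _
  have hκ0 : 0 < κ := lt_min hC0' hρ0
  -- lower bound t from the radius hypothesis
  have hrad2 : (n:ℝ) ^ (-(1 - ε)) ≤ t := by
    have hx0 : (0:ℝ) ≤ (n:ℝ) ^ (-(1 - ε) / 2) := Real.rpow_nonneg hnpos.le _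
    have h1 : ((n:ℝ) ^ (-(1 - ε) / 2)) ^ 2 ≤ (Real.sqrt t) ^ 2 :=
      pow_le_pow_left₀ hx0 hrad 2
    rw [Real.sq_sqrt ht0] at h1
    have h2 : ((n:ℝ) ^ (-(1 - ε) / 2)) ^ 2 = (n:ℝ) ^ (-(1 - ε)) := by
      rw [← Real.rpow_natCast ((n:ℝ) ^ (-(1 - ε) / 2)) 2, ← Real.rpow_mul hnpos.le]
      norm_num
    rwa [h2] at h1
  have hnt : (n:ℝ) ^ ε ≤ (n:ℝ) * t := by
    have h1 : (n:ℝ) * (n:ℝ) ^ (-(1 - ε)) ≤ (n:ℝ) * t :=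
      mul_le_mul_of_nonneg_left hrad2 hnpos.le
    have h2 : (n:ℝ) * (n:ℝ) ^ (-(1 - ε)) = (n:ℝ) ^ ε := by
      nth_rewrite 1 [← Real.rpow_one (n:ℝ)]
      rw [← Real.rpow_add hnpos]
      congr 1
      ring
    linarith
  rcases le_total t (δ ^ 2) with hsmall_case | hlarge_case
  · -- small regime
    have hb : ‖ftrans p θ‖ ≤ 1 - C * t := small θ hsmall_case
    have hCt1 : C * t ≤ 1 := by
      have : C * t ≤ C * δ ^ 2 := mul_le_mul_of_nonneg_left hsmall_case hC0'.le
      linarith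
    have h1mCt : 0 ≤ 1 - C * t := by linarith
    calc ‖ftrans p θ‖ ^ n ≤ (1 - C * t) ^ n :=
          pow_le_pow_left₀ habs0 hb n
      _ ≤ Real.exp (-(C * t)) ^ n := by
          apply pow_le_pow_left₀ h1mCt
          linarith [Real.add_one_le_exp (-(C * t))]
      _ = Real.exp ((n:ℝ) * (-(C * t))) := by rw [Real.exp_nat_mul]
      _ ≤ Real.exp (-κ * (n:ℝ) ^ ε) := by
          apply Real.exp_le_exp.mpr
          have hκnt : κ * (n:ℝ) ^ ε ≤ C * ((n:ℝ) * t) := by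
            apply mul_le_mul hκC hnt (Real.rpow_nonneg hnpos.le _) hC0'.le
          nlinarith
  · -- far regime
    have hcube' : ∀ i, |θ i| ≤ Real.pi := by
      intro i
      obtain ⟨hlo, hhi⟩ := hθcube i
      rw [abs_le]
      exact ⟨hlo.le, hhi⟩
    have hb : ‖ftrans p θ‖ ≤ 1 - ρ := hfar θ hcube' hlarge_case
    have h1mρ : 0 ≤ 1 - ρ := le_trans habs0 hb
    calc ‖ftrans p θ‖ ^ n ≤ (1 - ρ) ^ n := pow_le_pow_left₀ habs0 hb n
      _ ≤ Real.exp (-ρ) ^ n := by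
          apply pow_le_pow_left₀ h1mρ
          linarith [Real.add_one_le_exp (-ρ)]
      _ = Real.exp ((n:ℝ) * (-ρ)) := by rw [Real.exp_nat_mul]
      _ ≤ Real.exp (-κ * (n:ℝ) ^ ε) := by
          apply Real.exp_le_exp.mpr
          have hne : (n:ℝ) ^ ε ≤ (n:ℝ) := by
            calc (n:ℝ) ^ ε ≤ (n:ℝ) ^ (1:ℝ) :=
                  Real.rpow_le_rpow_of_exponent_le hn1 hε1.le
              _ = (n:ℝ) := Real.rpow_one _
          have : κ * (n:ℝ) ^ ε ≤ ρ * (n:ℝ) :=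
            mul_le_mul hκρ hne (Real.rpow_nonneg hnpos.le _) hρ0.le
          nlinarith
end
end
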